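/- arXiv:2106.15311 — 3 statements merged into one kernel-verified Lean document; each statement's English description precedes it below -/
import Mathlib

section
/- In every reachable state of a set automaton, for every match goal ℓ₁@p₁,…,ℓₙ@pₙ → ℓ@p, each obligation position pᵢ is below the announcement position p (p is a prefix of each pᵢ). -/
/-- A position is a finite list of positive natural numbers. -/
abbrev Pos : Type := List ℕ+

/-- `below p q` (written `p ≤ q` in the paper) holds iff `q` is a prefix of `p`. -/
def below (p q : Pos) : Prop := ∃ q'' : Pos, p = q ++ q''

/-- Terms over a signature `F`, with a single variable `ω` (patterns are linear). -/
inductive Tm (F : Type) : Type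
  | var : Tm F
  | app : F → List (Tm F) → Tm F

variable {F : Type}

/-- Head symbol of a term (none for the variable). -/
def hd : Tm F → Option F
  | .var => none
  | .app f _ => some f

/-- The subterm of `t` at position `p`, if `p` is in the domain of `t`. -/
def subtermAt : Tm F → Pos → Option (Tm F)
  | t, [] => some t
  | .var, _ :: _ => none
  | .app _ ts, i :: p => (ts[(i : ℕ) - 1]?).bind (fun u => subtermAt u p)

/-- The domain (set of positions) of a term. -/
def Dom (t : Tm F) : Set Pos := {p | (subtermAt t p).isSome}

/-- `t` is a closed term: it contains no variable. -/
def Closed (t : Tm F) : Prop := ∀ p u, subtermAt t p = some u → u ≠ Tm.var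

/-- Terms that respect the arity function of the signature. -/
inductive WF (ar : F → ℕ) : Tm F → Prop
  | var : WF ar Tm.var
  | app : ∀ f ts, ts.length = ar f → (∀ u ∈ ts, WF ar u) → WF ar (Tm.app f ts)

/-- Pattern `ℓ` matches term `t` at position `p`: for every non-variable
position `p'` of `ℓ`, the head symbols of `t[p.p']` and `ℓ[p']` agree. -/
def Matches (ℓ t : Tm F) (p : Pos) : Prop :=
  ∀ p' u, subtermAt ℓ p' = some u → u ≠ Tm.var →
    ∃ v, subtermAt t (p ++ p') = some v ∧ hd v = hd u

/-- A match obligation: a set of (subpattern, position) pairs. -/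
abbrev Obl (F : Type) := Set (Tm F × Pos)
/-- A match goal: a match obligation together with a match announcement. -/
abbrev Goal (F : Type) := Obl F × (Tm F × Pos)
/-- A state of the set automaton: a set of match goals. -/
abbrev St (F : Type) := Set (Goal F)

/-- The positions of a match obligation. -/
def posOf (mo : Obl F) : Set Pos := {p | ∃ u, (u, p) ∈ mo}

/-- All match obligation positions of a state. -/
def posMO (s : St F) : Set Pos := {p | ∃ g ∈ s, p ∈ posOf g.1}

/-- Reduction of a match obligation after observing a symbol of arity `n`
at position `p`: pairs at other positions are kept, and the pair at `p` is
replaced by obligations for its non-variable arguments. -/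
def reduce (mo : Obl F) (n : ℕ) (p : Pos) : Obl F :=
  {x | x ∈ mo ∧ x.2 ≠ p} ∪
  {x | ∃ (ℓ u : Tm F) (i : ℕ+), (ℓ, p) ∈ mo ∧ (i : ℕ) ≤ n ∧
        subtermAt ℓ [i] = some u ∧ u ≠ Tm.var ∧ x = (u, p ++ [i])}

/-- The `f`-derivative of state `s` labelled with position `lab`:
unchanged goals, reduced goals and fresh goals. -/
def derivS (pats : Set (Tm F)) (ar : F → ℕ) (s : St F) (lab : Pos) (f : F) : St F :=
  {g | g ∈ s ∧ lab ∉ posOf g.1} ∪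
  {g | ∃ mo ma, (mo, ma) ∈ s ∧ (∃ ℓ, (ℓ, lab) ∈ mo ∧ hd ℓ = some f) ∧
        reduce mo (ar f) lab ≠ ∅ ∧ g = (reduce mo (ar f) lab, ma)} ∪
  {g | ∃ (ℓ : Tm F) (i : ℕ+), ℓ ∈ pats ∧ (i : ℕ) ≤ ar f ∧
        g = ({(ℓ, lab ++ [i])}, (ℓ, lab ++ [i]))}

/-- The direct dependency relation: the obligation position sets intersect. -/
def dirDep (g₁ g₂ : Goal F) : Prop := (posOf g₁.1 ∩ posOf g₂.1).Nonempty

/-- `K` is an equivalence class of `X` under the transitive closure of the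
direct dependency relation restricted to `X`. -/
def IsClass (X K : St F) : Prop :=
  ∃ g ∈ X, K = {g' | g' ∈ X ∧
    Relation.ReflTransGen (fun a b => a ∈ X ∧ b ∈ X ∧ dirDep a b) g g'}

/-- The match announcement positions of a set of goals. -/
def posMA (K : St F) : Set Pos := {p | ∃ mo ℓ, (mo, (ℓ, p)) ∈ K}

/-- `g` is the greatest common prefix (join) of the set of positions `P`. -/
def IsGcp (P : Set Pos) (g : Pos) : Prop :=
  (∀ p ∈ P, below p g) ∧ ∀ r : Pos, (∀ p ∈ P, below p r) → below g r

/-- Lift a match goal by stripping the common prefix `g` from all positions. -/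
def liftGoal (g : Pos) (x : Goal F) : Goal F :=
  ((fun y : Tm F × Pos => (y.1, y.2.drop g.length)) '' x.1,
   (x.2.1, x.2.2.drop g.length))

/-- Lift a set of match goals. -/
def liftSt (g : Pos) (K : St F) : St F := liftGoal g '' K

/-- The transition function of the set automaton: `(s', p') ∈ delta pats ar L s f`
iff `s'` is the lifting of a dependency class `K` of the derivative and `p'` is
the greatest common prefix of the announcement positions of `K`. -/
def delta (pats : Set (Tm F)) (ar : F → ℕ) (L : St F → Pos) (s : St F) (f : F) :
    Set (St F × Pos) :=
  {x | ∃ K, IsClass (derivS pats ar s (L s) f) K ∧ IsGcp (posMA K) x.2 ∧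
        x.1 = liftSt x.2 K}

/-- The initial state: all fresh root goals. -/
def initSt (pats : Set (Tm F)) : St F :=
  {g | ∃ ℓ ∈ pats, g = ({(ℓ, ([] : Pos))}, (ℓ, ([] : Pos)))}

/-- Reachable states of the set automaton. -/
inductive Reachable (pats : Set (Tm F)) (ar : F → ℕ) (L : St F → Pos) : St F → Prop
  | init : Reachable pats ar L (initSt pats)
  | step : ∀ s f s' p, Reachable pats ar L s →
      (s', p) ∈ delta pats ar L s f → Reachable pats ar L s'

/-- The labelling function `L` picks, for every reachable state, an obligation
position of one of its root goals. -/
def RootLabel (pats : Set (Tm F)) (ar : F → ℕ) (L : St F → Pos) : Prop :=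
  ∀ s, Reachable pats ar L s →
    ∃ mo ℓ, (mo, (ℓ, ([] : Pos))) ∈ s ∧ L s ∈ posOf mo

/-- The nodes of the evaluation tree `ET_M(t)`. -/
inductive Node (pats : Set (Tm F)) (ar : F → ℕ) (L : St F → Pos) (t : Tm F) :
    St F → Pos → Prop
  | root : Node pats ar L t (initSt pats) []
  | step : ∀ s p f s' p', Node pats ar L t s p →
      (∃ v, subtermAt t (p ++ L s) = some v ∧ hd v = some f) →
      (s', p') ∈ delta pats ar L s f →
      Node pats ar L t s' (p ++ p')

/-- The edges of the evaluation tree `ET_M(t)`. -/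
def EdgeRel (pats : Set (Tm F)) (ar : F → ℕ) (L : St F → Pos) (t : Tm F)
    (s : St F) (p : Pos) (s' : St F) (q : Pos) : Prop :=
  Node pats ar L t s p ∧ ∃ f p',
    (∃ v, subtermAt t (p ++ L s) = some v ∧ hd v = some f) ∧
    (s', p') ∈ delta pats ar L s f ∧ q = p ++ p'

/-- The work set `W(s,p)`: the positions of `t` below the position pointer that
still have to be inspected. -/
def Work (t : Tm F) (s : St F) (p : Pos) : Set Pos :=
  {x | ∃ q, x = p ++ q ∧ x ∈ Dom t ∧ ∃ r ∈ posMO s, below q r}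

/-- The output function: match announcements whose obligation is completed by
observing `f` at the label position. -/
def outS (ar : F → ℕ) (L : St F → Pos) (s : St F) (f : F) : Set (Tm F × Pos) :=
  {ma | ({(Tm.app f (List.replicate (ar f) Tm.var), L s)}, ma) ∈ s}

lemma below_refl' (p : Pos) : below p p := ⟨[], by simp⟩

/-- The invariant is preserved by the derivative construction. -/
lemma derivS_inv {F : Type} (pats : Set (Tm F)) (ar : F → ℕ) (s : St F)
    (lab : Pos) (f : F)
    (ih : ∀ (mo : Obl F) (ℓ : Tm F) (p : Pos), (mo, (ℓ, p)) ∈ s →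
      ∀ q ∈ posOf mo, below q p) :
    ∀ (mo : Obl F) (ℓ : Tm F) (p : Pos),
      (mo, (ℓ, p)) ∈ derivS pats ar s lab f → ∀ q ∈ posOf mo, below q p := by
  intro mo ℓ p hmem q hq
  obtain ⟨u, hu⟩ := hq
  rcases hmem with (⟨hs, -⟩ | ⟨mo₀, ma, hs, -, -, heq⟩) | ⟨ℓ', i, -, -, heq⟩
  · exact ih mo ℓ p hs q ⟨u, hu⟩
  · obtain ⟨h1, h2⟩ := Prod.mk.injEq .. ▸ heq
    subst h1
    obtain rfl : ma = (ℓ, p) := h2.symm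
    rcases hu with ⟨hm, -⟩ | ⟨ℓ₀, u', i, hℓ₀, -, -, -, hx⟩
    · exact ih mo₀ ℓ p hs q ⟨u, hm⟩
    · obtain ⟨-, rfl⟩ := Prod.mk.injEq .. ▸ hx
      obtain ⟨r, hr⟩ := ih mo₀ ℓ p hs lab ⟨ℓ₀, hℓ₀⟩
      exact ⟨r ++ [i], by simp [hr]⟩
  · obtain ⟨h1, h2⟩ := Prod.mk.injEq .. ▸ heq
    subst h1
    obtain rfl : p = lab ++ [i] := congrArg Prod.snd h2
    obtain rfl : q = lab ++ [i] := congrArg Prod.snd (Set.eq_of_mem_singleton hu)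
    exact below_refl' _

/-- In every reachable state, every obligation position of a match goal is
below (i.e. extends) the position of its match announcement. -/
theorem oblPos_below_maPos {F : Type} (pats : Set (Tm F)) (ar : F → ℕ)
    (L : St F → Pos) (hpats : pats.Nonempty)
    (hpv : ∀ ℓ ∈ pats, ℓ ≠ Tm.var) (hL : RootLabel pats ar L) :
    ∀ s, Reachable pats ar L s →
      ∀ (mo : Obl F) (ℓ : Tm F) (p : Pos), (mo, (ℓ, p)) ∈ s →
        ∀ q ∈ posOf mo, below q p := by
  intro s hr
  induction hr with
  | init =>
    intro mo ℓ p hmem q hq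
    obtain ⟨ℓ', -, heq⟩ := hmem
    obtain ⟨h1, h2⟩ := Prod.mk.injEq .. ▸ heq
    subst h1
    obtain rfl : p = [] := congrArg Prod.snd h2
    obtain ⟨u, hu⟩ := hq
    obtain rfl : q = [] := congrArg Prod.snd (Set.eq_of_mem_singleton hu)
    exact below_refl' _
  | step s f s' p' hr hdel ih =>
    obtain ⟨K, hK, hgcp, heq⟩ := hdel
    have hgcp' : IsGcp (posMA K) p' := hgcp
    have heq' : s' = liftSt p' K := heq
    clear hgcp heq
    subst heq'
    intro mo ℓ p hmem q hq
    obtain ⟨⟨mo₀, ℓ₀, p₀⟩, hginK, hlift⟩ := hmem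
    simp only [liftGoal, Prod.mk.injEq] at hlift
    obtain ⟨rfl, rfl, rfl⟩ := hlift
    obtain ⟨u, hu⟩ := hq
    obtain ⟨⟨u₀, q₀⟩, hq₀, hxeq⟩ := hu
    obtain rfl : List.drop p'.length q₀ = q := congrArg Prod.snd hxeq
    obtain ⟨g₀, -, hKeq⟩ := hK
    have hKsub : ∀ x ∈ K, x ∈ derivS pats ar s (L s) f := by
      intro x hx; rw [hKeq] at hx; exact hx.1
    have hinv := derivS_inv pats ar s (L s) f ih mo₀ ℓ₀ p₀ (hKsub _ hginK)
    obtain ⟨q₁, hq₁⟩ := hinv q₀ ⟨u₀, hq₀⟩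
    obtain ⟨p₁, hp₁⟩ := hgcp'.1 p₀ ⟨mo₀, ℓ₀, hginK⟩
    refine ⟨q₁, ?_⟩
    rw [hq₁, hp₁, List.drop_left, List.append_assoc, List.drop_left]
end

section
/- Every reachable state of a set automaton contains a root goal, i.e., a match goal whose match announcement has position ε. -/
variable {F : Type}

/-! ### Auxiliary lemmas -/

lemma below_iff_prefix {p q : Pos} : below p q ↔ q <+: p :=
  ⟨fun ⟨a, h⟩ => ⟨a, h.symm⟩, fun ⟨a, h⟩ => ⟨a, h.symm⟩⟩

lemma prefix_total {l₁ l₂ l₃ : Pos} (h₁ : l₁ <+: l₃) (h₂ : l₂ <+: l₃) :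
    l₁ <+: l₂ ∨ l₂ <+: l₁ := by
  have e1 : l₁ = l₃.take l₁.length := List.prefix_iff_eq_take.mp h₁
  have e2 : l₂ = l₃.take l₂.length := List.prefix_iff_eq_take.mp h₂
  rcases le_total l₁.length l₂.length with h | h
  · left
    rw [List.prefix_iff_eq_take, e2, List.take_take, min_eq_left h]
    exact e1
  · right
    rw [List.prefix_iff_eq_take, e1, List.take_take, min_eq_left h]
    exact e2

/-- The invariant: in every goal, the announcement position is a prefix of
every obligation position. -/
def InvSt (s : St F) : Prop :=
  ∀ g ∈ s, ∀ p ∈ posOf g.1, below p g.2.2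

lemma invSt_init (pats : Set (Tm F)) : InvSt (initSt pats) := by
  rintro g ⟨ℓ, -, rfl⟩ p ⟨u, hu⟩
  simp only [Set.mem_singleton_iff, Prod.mk.injEq] at hu
  exact ⟨[], by simp [hu.2]⟩

lemma invSt_deriv (pats : Set (Tm F)) (ar : F → ℕ) {s : St F} (lab : Pos) (f : F)
    (hs : InvSt s) : InvSt (derivS pats ar s lab f) := by
  rintro g (hg | hg) p hp
  · rcases hg with ⟨hg, -⟩ | ⟨mo, ma, hmem, -, -, rfl⟩
    · exact hs g hg p hp
    · rcases hp with ⟨u, hu⟩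
      rcases hu with ⟨hu, -⟩ | ⟨ℓ, v, i, hℓ, -, -, -, heq⟩
      · exact hs (mo, ma) hmem p ⟨u, hu⟩
      · obtain ⟨h1, h2⟩ := Prod.mk.injEq .. ▸ heq
        rcases hs (mo, ma) hmem lab ⟨ℓ, hℓ⟩ with ⟨a, ha⟩
        exact ⟨a ++ [i], by simp [h2, ha]⟩
  · rcases hg with ⟨ℓ, i, -, -, rfl⟩
    rcases hp with ⟨u, hu⟩
    simp only [Set.mem_singleton_iff, Prod.mk.injEq] at hu
    exact ⟨[], by simp [hu.2]⟩

lemma invSt_lift {K : St F} {p : Pos} (hK : InvSt K)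
    (hp : ∀ q ∈ posMA K, below q p) : InvSt (liftSt p K) := by
  rintro g ⟨⟨mo, ma⟩, hmem, rfl⟩ r ⟨u, hu⟩
  rcases hu with ⟨⟨v, rv⟩, hv, heq⟩
  obtain ⟨h1, h2⟩ := Prod.mk.injEq .. ▸ heq
  rcases hK (mo, ma) hmem rv ⟨v, hv⟩ with ⟨a, ha⟩
  rcases hp ma.2 ⟨mo, ma.1, by simpa using hmem⟩ with ⟨b, hb⟩
  refine ⟨a, ?_⟩
  simp only [liftGoal]
  rw [← h2, ha, hb]
  simp [List.drop_left']

/-- In a dependency class of a state satisfying the invariant, there is a goal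
whose announcement position is a prefix of all announcement positions. -/
lemma class_min {X K : St F} (hX : InvSt X) (hK : IsClass X K) :
    ∃ g0 ∈ K, ∀ g' ∈ K, below g'.2.2 g0.2.2 := by
  obtain ⟨g, hgX, rfl⟩ := hK
  set R : Goal F → Goal F → Prop := fun a b => a ∈ X ∧ b ∈ X ∧ dirDep a b with hR
  set K : St F := {g' | g' ∈ X ∧ Relation.ReflTransGen R g g'} with hKdef
  have hRsymm : Symmetric R := by
    rintro a b ⟨ha, hb, q, hq1, hq2⟩
    exact ⟨hb, ha, q, hq2, hq1⟩
  have hgK : g ∈ K := ⟨hgX, Relation.ReflTransGen.refl⟩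
  -- choose a goal of minimal announcement-position length
  set S : Set ℕ := {n | ∃ g' ∈ K, g'.2.2.length = n} with hS
  have hSne : S.Nonempty := ⟨g.2.2.length, g, hgK, rfl⟩
  obtain ⟨g0, hg0K, hg0len⟩ := Nat.sInf_mem hSne
  refine ⟨g0, hg0K, ?_⟩
  intro g' hg'K
  rw [below_iff_prefix]
  have hpath : Relation.ReflTransGen R g0 g' :=
    (((@Relation.ReflTransGen.stdSymm _ R ⟨fun a b h => hRsymm h⟩).symm _ _ hg0K.2).trans hg'K.2)
  -- strengthen: along the path, membership in K and the prefix property hold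
  have main : ∀ c, Relation.ReflTransGen R g0 c → c ∈ K → g0.2.2 <+: c.2.2 := by
    intro c hc
    induction hc with
    | refl => intro _; exact List.prefix_refl _
    | @tail b c hb hbc ih =>
      intro _
      have hbK : b ∈ K := ⟨hbc.1, hg0K.2.trans hb⟩
      have hcK : c ∈ K := ⟨hbc.2.1, hg0K.2.trans (hb.tail hbc)⟩
      have ihb : g0.2.2 <+: b.2.2 := ih hbK
      obtain ⟨q, hqb, hqc⟩ := hbc.2.2
      have h1 : b.2.2 <+: q := below_iff_prefix.mp (hX b hbc.1 q hqb)
      have h2 : c.2.2 <+: q := below_iff_prefix.mp (hX c hbc.2.1 q hqc)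
      rcases prefix_total h1 h2 with h | h
      · exact ihb.trans h
      · -- c.2.2 <+: b.2.2 ; compare with g0.2.2
        rcases prefix_total ihb h with h' | h'
        · exact h'
        · -- c.2.2 <+: g0.2.2, but g0 has minimal length, so they are equal
          have hle : sInf S ≤ c.2.2.length := Nat.sInf_le ⟨c, hcK, rfl⟩
          have : c.2.2.length = g0.2.2.length :=
            le_antisymm (h'.length_le) (hg0len ▸ hle)
          exact (h'.eq_of_length this) ▸ List.prefix_refl _
  exact main g' hpath hg'K

lemma reachable_invSt (pats : Set (Tm F)) (ar : F → ℕ) (L : St F → Pos) :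
    ∀ s, Reachable pats ar L s → InvSt s := by
  intro s hs
  induction hs with
  | init => exact invSt_init pats
  | @step s f s' p _ hdelta ih =>
    obtain ⟨K, hKclass, hgcp, hs'⟩ := hdelta
    have hXinv : InvSt (derivS pats ar s (L s) f) := invSt_deriv pats ar (L s) f ih
    have hKsub : K ⊆ derivS pats ar s (L s) f := by
      obtain ⟨g, -, rfl⟩ := hKclass
      exact fun g' hg' => hg'.1
    have hKinv : InvSt K := fun g hg => hXinv g (hKsub hg)
    have hs'' : s' = liftSt p K := hs'
    exact hs'' ▸ invSt_lift hKinv hgcp.1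

/-- Every reachable state of the set automaton contains a root goal,
i.e. a match goal whose match announcement has position ε. -/
theorem reachable_has_rootGoal {F : Type} (pats : Set (Tm F)) (ar : F → ℕ)
    (L : St F → Pos) (hpats : pats.Nonempty)
    (hpv : ∀ ℓ ∈ pats, ℓ ≠ Tm.var)
    (hL : ∀ s, Reachable pats ar L s → ∃ g ∈ s, L s ∈ posOf g.1) :
    ∀ s, Reachable pats ar L s →
      ∃ (mo : Obl F) (ℓ : Tm F), (mo, (ℓ, ([] : Pos))) ∈ s := by
  intro s hs
  induction hs with
  | init =>
    obtain ⟨ℓ, hℓ⟩ := hpats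
    exact ⟨{(ℓ, ([] : Pos))}, ℓ, ⟨ℓ, hℓ, rfl⟩⟩
  | @step s f s' p hreach hdelta ih =>
    obtain ⟨K, hKclass, hgcp, hs'⟩ := hdelta
    have hXinv : InvSt (derivS pats ar s (L s) f) :=
      invSt_deriv pats ar (L s) f (reachable_invSt pats ar L s hreach)
    obtain ⟨g0, hg0K, hmin⟩ := class_min hXinv hKclass
    -- the gcp equals the announcement position of g0
    have hg0MA : g0.2.2 ∈ posMA K := ⟨g0.1, g0.2.1, by simpa using hg0K⟩
    have hmin' : ∀ q ∈ posMA K, below q g0.2.2 := by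
      rintro q ⟨mo, ℓ, hmem⟩
      exact hmin (mo, (ℓ, q)) hmem
    have h1 : below g0.2.2 p := hgcp.1 _ hg0MA
    have h2 : below p g0.2.2 := hgcp.2 _ hmin'
    have hpeq : p = g0.2.2 := by
      rcases h1 with ⟨a, ha⟩; rcases h2 with ⟨b, hb⟩
      have ha' := congrArg List.length ha
      have hb' := congrArg List.length hb
      simp only [List.length_append] at ha' hb'
      have hlen : a.length = 0 := by omega
      obtain rfl : a = [] := List.length_eq_zero_iff.mp hlen
      have hg0p : g0.2.2 = p := by simpa using ha
      exact hg0p.symm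
    refine ⟨(liftGoal p g0).1, g0.2.1, ?_⟩
    have hs'' : s' = liftSt p K := hs'
    have hmem : liftGoal p g0 ∈ s' := hs'' ▸ ⟨g0, hg0K, rfl⟩
    have : liftGoal p g0 = ((liftGoal p g0).1, (g0.2.1, ([] : Pos))) := by
      simp only [liftGoal, hpeq, List.drop_length]
    exact this ▸ hmem
end

section
/- Let N be the maximum arity of any function symbol and let R = {p : ∃ q ∈ D(L), ∃ r, ∃ i with 1 ≤ i ≤ N, r.p = q.i}, where D(L) is the set of positions of the patterns in L. Then for every reachable state s of the set automaton, all match obligation positions of s lie in R; consequently the set of reachable states is finite. -/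
variable {F : Type}

/-! ### Auxiliary material for the proof -/

lemma subtermAt_append' (t : Tm F) (p q : Pos) :
    subtermAt t (p ++ q) = (subtermAt t p).bind (fun u => subtermAt u q) := by
  induction p generalizing t with
  | nil => simp [subtermAt]
  | cons i p ih =>
    cases t with
    | var => simp [subtermAt]
    | app f ts => simp [subtermAt, ih, Option.bind_assoc]

lemma tm_ind' (P : Tm F → Prop) (hv : P .var)
    (ha : ∀ f ts, (∀ u ∈ ts, P u) → P (.app f ts)) : ∀ t, P t := by
  intro t
  induction t using Tm.rec (motive_2 := fun ts => ∀ u ∈ ts, P u) with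
  | var => exact hv
  | app f ts h => exact ha f ts h
  | nil =>
      rename_i u h
      exact absurd h List.not_mem_nil
  | cons u us hu hus =>
      rename_i v hv'
      rcases List.mem_cons.mp hv' with rfl | h
      · exact hu
      · exact hus v h

lemma Dom_finite' : ∀ t : Tm F, (Dom t).Finite := by
  refine tm_ind' _ ?_ ?_
  · apply Set.Finite.subset (Set.finite_singleton ([] : Pos))
    intro p hp
    cases p with
    | nil => rfl
    | cons i p => simp [Dom, subtermAt] at hp
  · intro f ts ih
    have hsub : Dom (Tm.app f ts) ⊆
        insert ([] : Pos) (⋃ u ∈ {u | u ∈ ts}, ⋃ i ∈ {i : ℕ+ | (i : ℕ) ≤ ts.length},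
          (fun p => i :: p) '' Dom u) := by
      intro p hp
      cases p with
      | nil => exact Set.mem_insert _ _
      | cons i p =>
        right
        simp only [Dom, subtermAt, Set.mem_setOf_eq] at hp
        obtain ⟨u, hu, hp⟩ := Option.bind_eq_some_iff.mp (Option.isSome_iff_exists.mp hp).choose_spec
        have hmem : u ∈ ts := List.mem_of_getElem? hu
        have hlt : (i : ℕ) - 1 < ts.length := by obtain ⟨h, -⟩ := List.getElem?_eq_some_iff.mp hu; exact h
        have hle : (i : ℕ) ≤ ts.length := by
          have := i.one_le
          omega
        refine Set.mem_biUnion hmem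
          (Set.mem_biUnion (show i ∈ {i : ℕ+ | (i : ℕ) ≤ ts.length} from hle) ?_)
        exact ⟨p, by simp [Dom, hp], rfl⟩
    exact Set.Finite.subset (Set.Finite.insert _ (Set.Finite.biUnion (List.finite_toSet ts)
      (fun u hu => Set.Finite.biUnion
        (Set.Finite.preimage (fun a _ b _ h => PNat.coe_injective h) (Set.finite_Iic ts.length))
        (fun i _ => (ih u hu).image _)))) hsub

/-- The bounding set `R`. -/
def Rset (pats : Set (Tm F)) (N : ℕ) : Set Pos :=
  {p : Pos | ∃ q, (∃ ℓ ∈ pats, q ∈ Dom ℓ) ∧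
      ∃ (r : Pos) (i : ℕ+), (i : ℕ) ≤ N ∧ r ++ p = q ++ [i]}

lemma subtermAt_nil (t : Tm F) : subtermAt t [] = some t := by cases t <;> rfl

lemma Rset_suffix {pats : Set (Tm F)} {N : ℕ} {p p' : Pos}
    (h : p ∈ Rset pats N) (hs : ∃ r : Pos, r ++ p' = p) : p' ∈ Rset pats N := by
  obtain ⟨q, hq, r, i, hi, hr⟩ := h
  obtain ⟨r', hr'⟩ := hs
  exact ⟨q, hq, r ++ r', i, hi, by rw [List.append_assoc, hr', hr]⟩

lemma Rset_finite {pats : Set (Tm F)} {N : ℕ} (hfin : pats.Finite) :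
    (Rset pats N).Finite := by
  have : Rset pats N ⊆
      ⋃ q ∈ {q : Pos | ∃ ℓ ∈ pats, q ∈ Dom ℓ}, ⋃ i ∈ {i : ℕ+ | (i : ℕ) ≤ N},
        {p : Pos | p <:+ q ++ [i]} := by
    rintro p ⟨q, hq, r, i, hi, hr⟩
    exact Set.mem_biUnion hq (Set.mem_biUnion (show i ∈ {i : ℕ+ | (i : ℕ) ≤ N} from hi) ⟨r, hr⟩)
  refine Set.Finite.subset ?_ this
  refine Set.Finite.biUnion ?_ (fun q _ => Set.Finite.biUnion
    (Set.Finite.preimage (fun a _ b _ h => PNat.coe_injective h) (Set.finite_Iic N))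
    (fun i _ => ?_))
  · have : {q : Pos | ∃ ℓ ∈ pats, q ∈ Dom ℓ} = ⋃ ℓ ∈ pats, Dom ℓ := by
      ext q; simp
    rw [this]
    exact Set.Finite.biUnion hfin (fun ℓ _ => Dom_finite' ℓ)
  · exact Set.Finite.subset (List.finite_toSet (q ++ [i]).tails)
      (fun p hp => (List.mem_tails _ _).mpr hp)

/-- The state invariant used in the induction on reachability. -/
def InvS (pats : Set (Tm F)) (N : ℕ) (s : St F) : Prop :=
  ∀ mo ℓ pa, (mo, (ℓ, pa)) ∈ s → ℓ ∈ pats ∧ mo.Nonempty ∧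
    ∀ u p, (u, p) ∈ mo →
      (∃ q, subtermAt ℓ q = some u ∧ p = pa ++ q) ∧ p ∈ Rset pats N

/-- All match obligation positions of reachable states lie in the finite set
`R = {p | ∃ q ∈ D(L), ∃ r, ∃ i ≤ N, r.p = q.i}`; consequently there are only
finitely many reachable states. -/

theorem posMO_bounded_and_finitely_many_states {F : Type} (pats : Set (Tm F))
    (ar : F → ℕ) (L : St F → Pos) (N : ℕ) (hN1 : 1 ≤ N) (hN : ∀ f, ar f ≤ N)
    (hfin : pats.Finite) (hpats : pats.Nonempty)
    (hWF : ∀ ℓ ∈ pats, WF ar ℓ) (hpv : ∀ ℓ ∈ pats, ℓ ≠ Tm.var)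
    (hL : RootLabel pats ar L) :
    (∀ s, Reachable pats ar L s → posMO s ⊆
      {p : Pos | ∃ q, (∃ ℓ ∈ pats, q ∈ Dom ℓ) ∧
        ∃ (r : Pos) (i : ℕ+), (i : ℕ) ≤ N ∧ r ++ p = q ++ [i]}) ∧
    {s : St F | Reachable pats ar L s}.Finite := by
    classical
  -- the bounding set as written in the statement is `Rset pats N`
  have hRdef : {p : Pos | ∃ q, (∃ ℓ ∈ pats, q ∈ Dom ℓ) ∧
      ∃ (r : Pos) (i : ℕ+), (i : ℕ) ≤ N ∧ r ++ p = q ++ [i]} = Rset pats N := rfl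
  -- the invariant holds for all reachable states
  have hInv : ∀ s, Reachable pats ar L s → InvS pats N s := by
    intro s hs
    induction hs with
    | init =>
        intro mo ℓ pa hmem
        obtain ⟨ℓ', hℓ', heq⟩ := hmem
        have h1 : mo = {(ℓ', ([] : Pos))} := congrArg Prod.fst heq
        have h2 : ℓ = ℓ' := congrArg (fun g : Goal F => g.2.1) heq
        have h3 : pa = ([] : Pos) := congrArg (fun g : Goal F => g.2.2) heq
        subst h1 h2 h3
        have hnil : ([] : Pos) ∈ Rset pats N := by
          obtain ⟨ℓ0, hℓ0⟩ := hpats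
          refine ⟨[], ⟨ℓ0, hℓ0, by simp [Dom, subtermAt]⟩,
            [(⟨1, one_pos⟩ : ℕ+)], ⟨1, one_pos⟩, by simpa using hN1, by simp⟩
        refine ⟨hℓ', ⟨(ℓ, []), rfl⟩, ?_⟩
        rintro u p hup
        rw [Set.mem_singleton_iff] at hup
        have hu : u = ℓ := congrArg Prod.fst hup
        have hp : p = ([] : Pos) := congrArg Prod.snd hup
        subst hu hp
        exact ⟨⟨[], subtermAt_nil _, rfl⟩, hnil⟩
    | step s f s' p hsr hdel ih =>
        obtain ⟨K, hKcl, hgcp, hs'⟩ := hdel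
        obtain ⟨g₀, hg₀, hKeq⟩ := hKcl
        have hKsub : ∀ x ∈ K, x ∈ derivS pats ar s (L s) f := by
          intro x hx; rw [hKeq] at hx; exact hx.1
        -- the label is a position in the domain of some pattern
        obtain ⟨mo₀, ℓ₀, hroot, u₀, hu₀⟩ := hL s hsr
        have hlabDom : L s ∈ Dom ℓ₀ := by
          obtain ⟨⟨q, hq, hpq⟩, -⟩ := (ih mo₀ ℓ₀ [] hroot).2.2 u₀ (L s) hu₀
          have : q = L s := by simpa using hpq.symm
          subst this
          simp [Dom, hq]
        have hℓ₀ : ℓ₀ ∈ pats := (ih mo₀ ℓ₀ [] hroot).1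
        have hlabR : ∀ i : ℕ+, (i : ℕ) ≤ ar f → L s ++ [i] ∈ Rset pats N :=
          fun i hi => ⟨L s, ⟨ℓ₀, hℓ₀, hlabDom⟩, [], i, le_trans hi (hN f), by simp⟩
        -- the invariant holds for the derivative
        have hInvD : InvS pats N (derivS pats ar s (L s) f) := by
          intro mo ℓ pa hmem
          rcases hmem with (h | h) | h
          · exact ih mo ℓ pa h.1
          · obtain ⟨mo₁, ma, hmo₁, -, hne, heq⟩ := h
            have h1 : mo = reduce mo₁ (ar f) (L s) := congrArg Prod.fst heq
            have h2 : ma = (ℓ, pa) := (congrArg Prod.snd heq).symm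
            subst h2
            obtain ⟨hℓ, -, hpairs⟩ := ih mo₁ ℓ pa hmo₁
            refine ⟨hℓ, ?_, ?_⟩
            · rw [h1]; exact Set.nonempty_iff_ne_empty.mpr hne
            · intro u pp hpp
              rw [h1] at hpp
              rcases hpp with hkeep | ⟨ℓu, u', i, hℓu, hi, hsub, hnv, heq'⟩
              · exact hpairs u pp hkeep.1
              · have hu : u = u' := congrArg Prod.fst heq'
                have hp : pp = L s ++ [i] := congrArg Prod.snd heq'
                subst hu hp
                obtain ⟨⟨q, hq, hpq⟩, -⟩ := hpairs ℓu (L s) hℓu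
                refine ⟨⟨q ++ [i], ?_, by rw [hpq, List.append_assoc]⟩, hlabR i hi⟩
                rw [subtermAt_append', hq]
                exact hsub
          · obtain ⟨ℓ', i, hℓ', hi, heq⟩ := h
            have h1 : mo = {(ℓ', L s ++ [i])} := congrArg Prod.fst heq
            have h2 : ℓ = ℓ' := congrArg (fun g : Goal F => g.2.1) heq
            have h3 : pa = L s ++ [i] := congrArg (fun g : Goal F => g.2.2) heq
            subst h2 h3 h1
            refine ⟨hℓ', ⟨(ℓ, L s ++ [i]), rfl⟩, ?_⟩
            rintro u pp hup
            rw [Set.mem_singleton_iff] at hup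
            have hu : u = ℓ := congrArg Prod.fst hup
            have hp : pp = L s ++ [i] := congrArg Prod.snd hup
            subst hu hp
            exact ⟨⟨[], subtermAt_nil _, by simp⟩, hlabR i hi⟩
        -- transfer the invariant through the lifting
        have hs2 : s' = liftSt p K := hs'
        subst hs2
        intro mo ℓ pa hmem
        obtain ⟨x, hxK, hlift⟩ := hmem
        obtain ⟨xmo, xℓ, xpa⟩ := x
        have h1 : mo = (fun y : Tm F × Pos => (y.1, y.2.drop p.length)) '' xmo :=
          (congrArg Prod.fst hlift).symm
        have h2 : ℓ = xℓ := (congrArg (fun g : Goal F => g.2.1) hlift).symm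
        have h3 : pa = xpa.drop p.length := (congrArg (fun g : Goal F => g.2.2) hlift).symm
        obtain ⟨pa'', hpa''⟩ : below xpa p := hgcp.1 xpa ⟨xmo, xℓ, hxK⟩
        have hdrop : xpa.drop p.length = pa'' := by rw [hpa'']; exact List.drop_left
        obtain ⟨hxℓ, hxne, hxpairs⟩ := hInvD xmo xℓ xpa (hKsub _ hxK)
        subst h2
        refine ⟨hxℓ, by rw [h1]; exact hxne.image _, ?_⟩
        intro u pp hpp
        rw [h1] at hpp
        obtain ⟨⟨u₁, p₁⟩, hin, heq'⟩ := hpp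
        have hu : u₁ = u := congrArg Prod.fst heq'
        have hp : pp = p₁.drop p.length := (congrArg Prod.snd heq').symm
        subst hu hp
        obtain ⟨⟨q, hq, hpq⟩, hpR⟩ := hxpairs u₁ p₁ hin
        have hp₁ : p₁ = p ++ (pa'' ++ q) := by
          rw [hpq, hpa'', List.append_assoc]
        have hdrop₁ : p₁.drop p.length = pa'' ++ q := by rw [hp₁]; exact List.drop_left
        refine ⟨⟨q, hq, by rw [hdrop₁, h3, hdrop]⟩, ?_⟩
        exact Rset_suffix hpR ⟨p, by rw [hdrop₁, ← hp₁]⟩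
  refine ⟨?_, ?_⟩
  · intro s hs pp hpp
    obtain ⟨g, hg, u, hu⟩ := hpp
    exact ((hInv s hs g.1 g.2.1 g.2.2 hg).2.2 u pp hu).2
  · -- finiteness of the set of reachable states
    set SubsAll : Set (Tm F) := {u | ∃ ℓ ∈ pats, ∃ q, subtermAt ℓ q = some u} with hS
    have hSfin : SubsAll.Finite := by
      have : SubsAll ⊆ ⋃ ℓ ∈ pats, (fun q => (subtermAt ℓ q).getD Tm.var) '' Dom ℓ := by
        rintro u ⟨ℓ, hℓ, q, hq⟩
        exact Set.mem_biUnion hℓ ⟨q, by simp [Dom, hq], by simp [hq]⟩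
      exact Set.Finite.subset
        (Set.Finite.biUnion hfin (fun ℓ _ => (Dom_finite' ℓ).image _)) this
    set Pref : Set Pos := {pa | ∃ pp ∈ Rset pats N, ∃ q : Pos, pa ++ q = pp} with hP
    have hPfin : Pref.Finite := by
      have : Pref ⊆ ⋃ pp ∈ Rset pats N, {pa : Pos | pa <+: pp} := by
        rintro pa ⟨pp, hpp, q, hq⟩
        exact Set.mem_biUnion hpp ⟨q, hq⟩
      exact Set.Finite.subset (Set.Finite.biUnion (Rset_finite hfin) (fun pp _ =>
        Set.Finite.subset (List.finite_toSet pp.inits)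
          (fun pa hpa => (List.mem_inits _ _).mpr hpa))) this
    set G : Set (Goal F) :=
      {mo : Obl F | mo ⊆ SubsAll ×ˢ Rset pats N} ×ˢ (pats ×ˢ Pref) with hG
    have hGfin : G.Finite :=
      Set.Finite.prod (Set.Finite.finite_subsets (hSfin.prod (Rset_finite hfin)))
        (hfin.prod hPfin)
    have hsubG : ∀ s, Reachable pats ar L s → s ⊆ G := by
      intro s hs g hg
      obtain ⟨hℓ, ⟨w, hw⟩, hpairs⟩ := hInv s hs g.1 g.2.1 g.2.2 hg
      refine ⟨?_, hℓ, ?_⟩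
      · rintro ⟨u, pp⟩ hup
        obtain ⟨⟨q, hq, -⟩, hR⟩ := hpairs u pp hup
        exact ⟨⟨g.2.1, hℓ, q, hq⟩, hR⟩
      · obtain ⟨⟨q, -, hpq⟩, hR⟩ := hpairs w.1 w.2 hw
        exact ⟨w.2, hR, q, hpq.symm⟩
    exact Set.Finite.subset hGfin.finite_subsets (fun s hs => hsubG s hs)
end
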